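/- Let S be a Sturmian subshift, {n_k} integers with n_k ≥ 2n_{k−1} + 2k for all k, and X = X_{S,{n_k}} the associated subshift. Then X contains no periodic points. -/

import Mathlib

open Filter Topology MeasureTheory

/-- The left shift on `ℤ → Bool`. -/
def shiftB (x : ℤ → Bool) : ℤ → Bool := fun i => x (i + 1)

/-- A subshift over `{0,1}`: a closed shift-invariant subset of `{0,1}^ℤ`. -/
def IsSubshiftB (S : Set (ℤ → Bool)) : Prop :=
  IsClosed S ∧ ∀ x : ℤ → Bool, x ∈ S ↔ shiftB x ∈ S

/-- A Sturmian subshift: a nonempty minimal subshift with word complexity `n + 1`. -/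
def IsSturmian (S : Set (ℤ → Bool)) : Prop :=
  IsSubshiftB S ∧ S.Nonempty ∧
    (∀ x ∈ S, S ⊆ closure {y | ∃ t : ℤ, y = fun i => x (i + t)}) ∧
    ∀ n : ℕ, 1 ≤ n →
      Set.ncard {w : Fin n → Bool |
        ∃ x ∈ S, ∃ i : ℤ, ∀ l : Fin n, x (i + (l : ℕ)) = w l} = n + 1

/-- The subshift `X_{S,{n_k}}`: points `x` such that every window of length `n_k + 2k`
contains a `k`-letter word of the language of `S`. -/
def XS (S : Set (ℤ → Bool)) (nseq : ℕ → ℕ) : Set (ℤ → Bool) :=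
  {x | ∀ (i : ℤ) (k : ℕ), 1 ≤ k → ∃ j : ℤ, i ≤ j ∧ j + k ≤ i + nseq k + 2 * k ∧
    ∃ s ∈ S, ∃ t : ℤ, ∀ l < k, x (j + l) = s (t + l)}

/-- Shifting by any integer keeps membership in a subshift. -/
lemma shift_memB {S : Set (ℤ → Bool)} (hS : IsSubshiftB S) {s : ℤ → Bool} (hs : s ∈ S)
    (t : ℤ) : (fun i => s (i + t)) ∈ S := by
  induction t using Int.induction_on with
  | zero => simpa using hs
  | succ n ih =>
      have e : (fun i : ℤ => s (i + ((n : ℤ) + 1))) = shiftB (fun i => s (i + n)) := by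
        funext i; simp only [shiftB]; congr 1; ring
      rw [e]; exact (hS.2 _).1 ih
  | pred n ih =>
      apply (hS.2 (fun i : ℤ => s (i + (-(n : ℤ) - 1)))).2
      have e : shiftB (fun i : ℤ => s (i + (-(n : ℤ) - 1))) = (fun i : ℤ => s (i + (-n : ℤ))) := by
        funext i; simp only [shiftB]; congr 1; ring
      rw [e]; exact ih

/-- A `p`-periodic function of `ℤ` only depends on the residue mod `p`. -/
lemma periodic_emodB {f : ℤ → Bool} {p : ℕ} (h : ∀ i : ℤ, f (i + p) = f i)
    {a b : ℤ} (hab : a % p = b % p) : f a = f b := by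
  have hmul : ∀ j : ℤ, ∀ i : ℤ, f (i + p * j) = f i := by
    intro j
    induction j using Int.induction_on with
    | zero => intro i; simp
    | succ n ih =>
        intro i
        have e : i + (p : ℤ) * ((n : ℤ) + 1) = (i + p * n) + p := by ring
        rw [e, h, ih]
    | pred n ih =>
        intro i
        have e : i + (p : ℤ) * (-(n : ℤ)) = (i + p * (-(n : ℤ) - 1)) + p := by ring
        have := h (i + (p : ℤ) * (-(n : ℤ) - 1))
        rw [← e] at this
        rw [← ih i, ← this]
  have key : ∀ c : ℤ, f c = f (c % p) := by
    intro c
    conv_lhs => rw [← Int.emod_add_mul_ediv c p]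
    have e : c % p + (p : ℤ) * (c / p) = (c % p) + (p : ℤ) * (c / p) := rfl
    rw [e, hmul]
  rw [key a, key b, hab]

/-- A Sturmian subshift contains no periodic point. -/
lemma sturmian_no_periodicB {S : Set (ℤ → Bool)} (hS : IsSturmian S) {y : ℤ → Bool}
    (hy : y ∈ S) {p : ℕ} (hp : 0 < p) (hper : ∀ i : ℤ, y (i + p) = y i) : False := by
  -- the orbit of `y` is finite
  set g : ℤ → (ℤ → Bool) := fun t => fun i => y (i + t) with hg
  have hgmod : ∀ t : ℤ, g t = g (t % p) := by
    intro t
    funext i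
    exact periodic_emodB hper (by
      have e : i + t = (i + t % p) + (p : ℤ) * (t / p) := by
        conv_lhs => rw [← Int.emod_add_mul_ediv t p]
        ring
      rw [e, Int.add_mul_emod_self_left])
  set O : Set (ℤ → Bool) := {y' | ∃ t : ℤ, y' = fun i => y (i + t)} with hO
  have hOfin : O.Finite := by
    have hsub : O ⊆ g '' (Set.Ico (0 : ℤ) p) := by
      rintro y' ⟨t, rfl⟩
      exact ⟨t % p, ⟨Int.emod_nonneg t (by exact_mod_cast hp.ne'),
        Int.emod_lt_of_pos t (by exact_mod_cast hp)⟩, (hgmod t).symm⟩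
    exact ((Set.finite_Ico _ _).image g).subset hsub
  have hOclosed : IsClosed O := hOfin.isClosed
  have hSO : S ⊆ O := by
    have := hS.2.2.1 y hy
    rwa [hOclosed.closure_eq] at this
  -- hence every point of `S` is `p`-periodic
  have hall : ∀ z ∈ S, ∀ i : ℤ, z (i + p) = z i := by
    intro z hz i
    obtain ⟨t, rfl⟩ := hSO hz
    have e : i + (p : ℤ) + t = (i + t) + p := by ring
    simp only [e, hper]
  -- complexity contradiction
  have h2p : 0 < 2 ^ p := pow_pos (by norm_num) p
  set n : ℕ := 2 ^ p + p with hn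
  have hn1 : 1 ≤ n := by omega
  have hc := hS.2.2.2 n hn1
  set W : Set (Fin n → Bool) := {w : Fin n → Bool |
      ∃ x ∈ S, ∃ i : ℤ, ∀ l : Fin n, x (i + (l : ℕ)) = w l} with hW
  have hpn : p ≤ n := by omega
  set F : (Fin n → Bool) → (Fin p → Bool) := fun w a => w ⟨(a : ℕ), lt_of_lt_of_le a.2 hpn⟩
    with hF
  have hval : ∀ w ∈ W, ∀ l : Fin n, w l = F w ⟨(l : ℕ) % p, Nat.mod_lt _ hp⟩ := by
    rintro w ⟨x, hxS, i, hxi⟩ l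
    have hper' := hall x hxS
    show w l = w ⟨(l : ℕ) % p, lt_of_lt_of_le (Nat.mod_lt _ hp) hpn⟩
    rw [← hxi l, ← hxi ⟨(l : ℕ) % p, lt_of_lt_of_le (Nat.mod_lt _ hp) hpn⟩]
    refine periodic_emodB hper' ?_
    have e : (i + ((l : ℕ) : ℤ)) = (i + (((l : ℕ) % p : ℕ) : ℤ)) + (p : ℤ) * ((l : ℕ) / p : ℕ) := by
      have h := Nat.mod_add_div (l : ℕ) p
      have h2 : (((l : ℕ) % p : ℕ) : ℤ) + (p : ℤ) * (((l : ℕ) / p : ℕ) : ℤ) = ((l : ℕ) : ℤ) := by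
        exact_mod_cast h
      linarith
    rw [e, Int.add_mul_emod_self_left]
  have hinj : Set.InjOn F W := by
    intro w hw w' hw' hww
    funext l
    rw [hval w hw l, hww, ← hval w' hw' l]
  have hle : W.ncard ≤ (Set.univ : Set (Fin p → Bool)).ncard := by
    exact Set.ncard_le_ncard_of_injOn F (fun a _ => Set.mem_univ _) hinj (Set.finite_univ)
  rw [hc, Set.ncard_univ] at hle
  simp only [Nat.card_eq_fintype_card, Fintype.card_fun, Fintype.card_fin,
    Fintype.card_bool] at hle
  omega

/-- If `S` is Sturmian and `n_k ≥ 2 n_{k-1} + 2k`, then `X_{S,{n_k}}` has no periodic points. -/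
theorem XS_no_periodic_points (S : Set (ℤ → Bool)) (hS : IsSturmian S)
    (nseq : ℕ → ℕ) (hn : ∀ k : ℕ, 1 ≤ k → 2 * nseq (k - 1) + 2 * k ≤ nseq k)
    (x : ℤ → Bool) (hx : x ∈ XS S nseq) (p : ℕ) (hp : 0 < p) :
    ∃ i : ℤ, x (i + p) ≠ x i := by
  by_contra hcon
  push_neg at hcon
  -- for each m, get a point of S that is p-periodic on [-m, m)
  have hz : ∀ m : ℕ, ∃ z ∈ S, ∀ l : ℤ, -(m : ℤ) ≤ l → l < m → z (l + p) = z l := by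
    intro m
    obtain ⟨j, _, _, s, hsS, t, hst⟩ := hx 0 (2 * m + p) (by omega)
    refine ⟨fun i => s (i + (t + m)), shift_memB hS.1 hsS _, ?_⟩
    intro l hl1 hl2
    have key : ∀ l' : ℤ, 0 ≤ l' → l' < 2 * m + p → s (t + l') = x (j + l') := by
      intro l' h0 hlt
      have e : l' = ((l'.toNat : ℕ) : ℤ) := (Int.toNat_of_nonneg h0).symm
      rw [e]
      exact (hst l'.toNat (by omega)).symm
    have e1 : (l + (p : ℤ)) + (t + m) = t + (m + l + p) := by ring
    have e2 : l + (t + (m : ℤ)) = t + (m + l) := by ring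
    show s ((l + p) + (t + m)) = s (l + (t + m))
    rw [e1, e2, key (m + l + p) (by omega) (by omega), key (m + l) (by omega) (by omega)]
    have e3 : j + ((m : ℤ) + l + p) = (j + (m + l)) + p := by ring
    rw [e3, hcon]
  choose z hzS hzper using hz
  -- compactness: extract a limit point y ∈ S
  have hcpt : IsCompact S := hS.1.1.isCompact
  obtain ⟨y, hyS, φ, hφ, hlim⟩ := hcpt.tendsto_subseq hzS
  have hyper : ∀ i : ℤ, y (i + p) = y i := by
    intro i
    have hA : ∀ᶠ m in atTop, z (φ m) (i + p) = y (i + p) := by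
      have := (tendsto_pi_nhds.mp hlim) (i + p)
      rwa [nhds_discrete, tendsto_pure] at this
    have hB : ∀ᶠ m in atTop, z (φ m) i = y i := by
      have := (tendsto_pi_nhds.mp hlim) i
      rwa [nhds_discrete, tendsto_pure] at this
    have hC : ∀ᶠ m in atTop, i.natAbs + 1 ≤ m := eventually_ge_atTop _
    obtain ⟨m, h1, h2, h3⟩ := (hA.and (hB.and hC)).exists
    have hφm : i.natAbs + 1 ≤ φ m := le_trans h3 hφ.le_apply
    rw [← h1, ← h2]
    exact hzper (φ m) i (by omega) (by omega)
  exact sturmian_no_periodicB hS hyS hp hyper
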